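/- Let τ = (1 + √5)/2 and let V ⊆ ℝ³ be the set of 30 points consisting of all cyclic permutations of the coordinates of (0, 0, ±τ) together with all points (±1/2, ±τ/2, ±τ²/2) and their cyclic coordinate permutations (all sign choices independent). Then: (i) every v ∈ V has ‖v‖ = τ; (ii) the minimum of ‖v − w‖ over distinct v, w ∈ V equals 1. Consequently, with r = 1/√5, the 30 closed balls of radius r centered at the points ((1 + r)/τ)·v for v ∈ V all touch the closed unit ball centered at the origin (each center has norm 1 + r), the minimal distance between distinct centers equals 2r, so these balls have pairwise disjoint interiors and some pairs of them are tangent. -/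

import Mathlib

noncomputable section

/-- Euclidean 3-space. -/
abbrev E3 := EuclideanSpace ℝ (Fin 3)

/-- A point of ℝ³ from its coordinates. -/
def pt (a b c : ℝ) : E3 := WithLp.toLp 2 ![a, b, c]

/-- Cyclic permutation of the coordinates. -/
def cyc (x : E3) : E3 := pt (x 2) (x 0) (x 1)

/-- The golden ratio `τ = (1 + √5)/2`. -/
def τ : ℝ := (1 + Real.sqrt 5) / 2

/-- The sign choices `±1`. -/
def Sgn : Set ℝ := {1, -1}

/-- The 30 vertices of the regular icosidodecahedron of edge length 1: all cyclic
permutations of the coordinates of `(0, 0, ±τ)` together with all points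
`(±1/2, ±τ/2, ±τ²/2)` and their cyclic coordinate permutations. -/
def V : Set E3 :=
  {v | ∃ k : Fin 3, ∃ s ∈ Sgn, v = cyc^[(k : ℕ)] (pt 0 0 (s * τ))} ∪
  {v | ∃ k : Fin 3, ∃ s₁ ∈ Sgn, ∃ s₂ ∈ Sgn, ∃ s₃ ∈ Sgn,
    v = cyc^[(k : ℕ)] (pt (s₁ / 2) (s₂ * τ / 2) (s₃ * τ ^ 2 / 2))}

namespace Stmt17Aux

lemma s5_nonneg : (0:ℝ) ≤ Real.sqrt 5 := Real.sqrt_nonneg 5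
lemma s5_sq : Real.sqrt 5 ^ 2 = 5 := Real.sq_sqrt (by norm_num)
lemma s5_pos : (0:ℝ) < Real.sqrt 5 := Real.sqrt_pos.mpr (by norm_num)

lemma s5_irr : Irrational (Real.sqrt 5) := by
  have h : Irrational (Real.sqrt (5:ℕ)) := (by norm_num : Nat.Prime 5).irrational_sqrt
  simpa using h

lemma int_comb_eq_zero {a b : ℤ} (h : (a:ℝ) + b * Real.sqrt 5 = 0) : a = 0 ∧ b = 0 := by
  by_cases hb : b = 0
  · subst hb; simp at h; exact ⟨by exact_mod_cast h, rfl⟩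
  · exfalso
    apply s5_irr
    refine ⟨(-a/b : ℚ), ?_⟩
    have hb' : (b:ℝ) ≠ 0 := Int.cast_ne_zero.mpr hb
    push_cast
    field_simp
    linarith [h]

def Pok (a b : ℤ) : Prop :=
  (0 ≤ a ∧ 0 ≤ b) ∨ (0 ≤ a ∧ 5*b^2 ≤ a^2) ∨ (0 ≤ b ∧ a^2 ≤ 5*b^2)

instance (a b : ℤ) : Decidable (Pok a b) := by unfold Pok; infer_instance

lemma Pok_nonneg {a b : ℤ} (h : Pok a b) : 0 ≤ (a:ℝ) + b * Real.sqrt 5 := by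
  have h5 := s5_sq
  have h0 := s5_nonneg
  rcases h with ⟨ha, hb⟩ | ⟨ha, hab⟩ | ⟨hb, hab⟩
  · have ha' : (0:ℝ) ≤ a := by exact_mod_cast ha
    have hb' : (0:ℝ) ≤ b := by exact_mod_cast hb
    positivity
  · have ha' : (0:ℝ) ≤ a := by exact_mod_cast ha
    have hab' : 5*(b:ℝ)^2 ≤ (a:ℝ)^2 := by exact_mod_cast hab
    by_contra hlt
    push_neg at hlt
    have h2 : (a:ℝ) < (-(b:ℝ))*Real.sqrt 5 := by linarith
    have h3 := mul_self_lt_mul_self ha' h2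
    nlinarith [h3, h5]
  · have hb' : (0:ℝ) ≤ b := by exact_mod_cast hb
    have hab' : (a:ℝ)^2 ≤ 5*(b:ℝ)^2 := by exact_mod_cast hab
    by_contra hlt
    push_neg at hlt
    have h2 : (b:ℝ)*Real.sqrt 5 < -(a:ℝ) := by linarith
    have h3 := mul_self_lt_mul_self (mul_nonneg hb' h0) h2
    nlinarith [h3, h5]

abbrev P := (ℤ × ℤ) × (ℤ × ℤ) × (ℤ × ℤ)

def q (p : ℤ × ℤ) : ℝ := ((p.1 : ℝ) + (p.2 : ℝ) * Real.sqrt 5) / 4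

def emb (x : P) : E3 := pt (q x.1) (q x.2.1) (q x.2.2)

def psub (x y : P) : P :=
  ((x.1.1 - y.1.1, x.1.2 - y.1.2), (x.2.1.1 - y.2.1.1, x.2.1.2 - y.2.1.2),
   (x.2.2.1 - y.2.2.1, x.2.2.2 - y.2.2.2))

def NA (x : P) : ℤ :=
  x.1.1^2 + 5*x.1.2^2 + x.2.1.1^2 + 5*x.2.1.2^2 + x.2.2.1^2 + 5*x.2.2.2^2
def NB (x : P) : ℤ := 2*(x.1.1*x.1.2 + x.2.1.1*x.2.1.2 + x.2.2.1*x.2.2.2)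

lemma pt_ext {a b c a' b' c' : ℝ} (h1 : a = a') (h2 : b = b') (h3 : c = c') :
    pt a b c = pt a' b' c' := by rw [h1, h2, h3]

lemma pt_apply0 (a b c : ℝ) : pt a b c 0 = a := rfl
lemma pt_apply1 (a b c : ℝ) : pt a b c 1 = b := rfl
lemma pt_apply2 (a b c : ℝ) : pt a b c 2 = c := rfl

lemma cyc_pt (a b c : ℝ) : cyc (pt a b c) = pt c a b := rfl

lemma pt_sub (a b c d e f : ℝ) : pt a b c - pt d e f = pt (a-d) (b-e) (c-f) := by
  ext i; fin_cases i <;> rfl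

lemma normsq_pt (a b c : ℝ) : ‖pt a b c‖^2 = a^2 + b^2 + c^2 := by
  rw [EuclideanSpace.norm_eq, Real.sq_sqrt (by positivity)]
  simp [Fin.sum_univ_three, pt, Real.norm_eq_abs, sq_abs]

lemma emb_sub (x y : P) : emb x - emb y = emb (psub x y) := by
  unfold emb psub
  rw [pt_sub]
  refine pt_ext ?_ ?_ ?_ <;> (unfold q; push_cast; ring)

lemma normsq_emb (x : P) :
    ‖emb x‖^2 = ((NA x : ℝ) + (NB x : ℝ) * Real.sqrt 5)/16 := by
  unfold emb NA NB q
  rw [normsq_pt]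
  push_cast
  linear_combination (((x.1.2:ℝ)^2 + (x.2.1.2:ℝ)^2 + (x.2.2.2:ℝ)^2)/16) * s5_sq

lemma q_inj : Function.Injective q := by
  intro p p' h
  unfold q at h
  have h' : ((p.1 - p'.1 : ℤ):ℝ) + ((p.2 - p'.2 : ℤ):ℝ) * Real.sqrt 5 = 0 := by
    push_cast; linarith
  obtain ⟨h1, h2⟩ := int_comb_eq_zero h'
  have : p.1 = p'.1 := by omega
  have : p.2 = p'.2 := by omega
  exact Prod.ext (by omega) (by omega)

lemma emb_inj : Function.Injective emb := by
  intro x y h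
  have h0 := congrFun (congrArg WithLp.ofLp h) 0
  have h1 := congrFun (congrArg WithLp.ofLp h) 1
  have h2 := congrFun (congrArg WithLp.ofLp h) 2
  simp only [emb, pt_apply0, pt_apply1, pt_apply2] at h0 h1 h2
  exact Prod.ext (q_inj h0) (Prod.ext (q_inj h1) (q_inj h2))

def sgns : List ℤ := [1, -1]

def axisP (z : ℤ) : Fin 3 → P
  | 0 => ((0,0),(0,0),(2*z,2*z))
  | 1 => ((2*z,2*z),(0,0),(0,0))
  | 2 => ((0,0),(2*z,2*z),(0,0))

def famP (z₁ z₂ z₃ : ℤ) : Fin 3 → P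
  | 0 => ((2*z₁,0),(z₂,z₂),(3*z₃,z₃))
  | 1 => ((3*z₃,z₃),(2*z₁,0),(z₂,z₂))
  | 2 => ((z₂,z₂),(3*z₃,z₃),(2*z₁,0))

def L : List P :=
  ((sgns ×ˢ ([0,1,2] : List (Fin 3))).map fun p => axisP p.1 p.2) ++
  (((sgns ×ˢ sgns ×ˢ sgns) ×ˢ ([0,1,2] : List (Fin 3))).map
    fun p => famP p.1.1 p.1.2.1 p.1.2.2 p.2)

lemma mem_L_iff {x : P} :
    x ∈ L ↔ (∃ z ∈ sgns, ∃ k : Fin 3, x = axisP z k) ∨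
      (∃ z₁ ∈ sgns, ∃ z₂ ∈ sgns, ∃ z₃ ∈ sgns, ∃ k : Fin 3, x = famP z₁ z₂ z₃ k) := by
  constructor
  · intro hx
    rcases List.mem_append.mp hx with h | h
    · obtain ⟨⟨z, k⟩, hmem, rfl⟩ := List.mem_map.mp h
      exact Or.inl ⟨z, (List.mem_product.mp hmem).1, k, rfl⟩
    · obtain ⟨⟨⟨z₁, z₂, z₃⟩, k⟩, hmem, rfl⟩ := List.mem_map.mp h
      have := List.mem_product.mp hmem
      have h2 := List.mem_product.mp this.1
      have h3 := List.mem_product.mp h2.2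
      exact Or.inr ⟨z₁, h2.1, z₂, h3.1, z₃, h3.2, k, rfl⟩
  · rintro (⟨z, hz, k, rfl⟩ | ⟨z₁, h₁, z₂, h₂, z₃, h₃, k, rfl⟩)
    · refine List.mem_append.mpr (Or.inl (List.mem_map.mpr ⟨(z, k), ?_, rfl⟩))
      exact List.mem_product.mpr ⟨hz, by fin_cases k <;> simp⟩
    · refine List.mem_append.mpr (Or.inr (List.mem_map.mpr ⟨((z₁, z₂, z₃), k), ?_, rfl⟩))
      refine List.mem_product.mpr ⟨List.mem_product.mpr ⟨h₁, List.mem_product.mpr ⟨h₂, h₃⟩⟩, ?_⟩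
      fin_cases k <;> simp

lemma sgns_iff {z : ℤ} : z ∈ sgns ↔ z = 1 ∨ z = -1 := by simp [sgns]

lemma sgn_cast {z : ℤ} (hz : z ∈ sgns) : ((z:ℝ)) ∈ Sgn := by
  rcases sgns_iff.mp hz with rfl | rfl <;> simp [Sgn]

lemma sgn_int {s : ℝ} (hs : s ∈ Sgn) : ∃ z ∈ sgns, (z:ℝ) = s := by
  rcases hs with rfl | rfl
  · exact ⟨1, by simp [sgns], by norm_num⟩
  · exact ⟨-1, by simp [sgns], by norm_num⟩

lemma emb_axisP {z : ℤ} (k : Fin 3) :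
    emb (axisP z k) = cyc^[(k:ℕ)] (pt 0 0 ((z:ℝ) * τ)) := by
  fin_cases k
  · show emb ((0,0),(0,0),(2*z,2*z)) = pt 0 0 ((z:ℝ) * τ)
    refine pt_ext ?_ ?_ ?_ <;> (simp only [q, τ]; push_cast; ring)
  · show emb ((2*z,2*z),(0,0),(0,0)) = cyc (pt 0 0 ((z:ℝ) * τ))
    rw [cyc_pt]
    refine pt_ext ?_ ?_ ?_ <;> (simp only [q, τ]; push_cast; ring)
  · show emb ((0,0),(2*z,2*z),(0,0)) = cyc (cyc (pt 0 0 ((z:ℝ) * τ)))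
    rw [cyc_pt, cyc_pt]
    refine pt_ext ?_ ?_ ?_ <;> (simp only [q, τ]; push_cast; ring)

lemma emb_famP {z₁ z₂ z₃ : ℤ} (k : Fin 3) :
    emb (famP z₁ z₂ z₃ k) =
      cyc^[(k:ℕ)] (pt ((z₁:ℝ) / 2) ((z₂:ℝ) * τ / 2) ((z₃:ℝ) * τ ^ 2 / 2)) := by
  have h5 := s5_sq
  fin_cases k
  · show emb ((2*z₁,0),(z₂,z₂),(3*z₃,z₃)) =
      pt ((z₁:ℝ) / 2) ((z₂:ℝ) * τ / 2) ((z₃:ℝ) * τ ^ 2 / 2)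
    refine pt_ext ?_ ?_ ?_ <;> (simp only [q, τ]; push_cast; try ring) <;>
      linear_combination (-(z₃:ℝ)/8) * h5
  · show emb ((3*z₃,z₃),(2*z₁,0),(z₂,z₂)) =
      cyc (pt ((z₁:ℝ) / 2) ((z₂:ℝ) * τ / 2) ((z₃:ℝ) * τ ^ 2 / 2))
    rw [cyc_pt]
    refine pt_ext ?_ ?_ ?_ <;> (simp only [q, τ]; push_cast; try ring) <;>
      linear_combination (-(z₃:ℝ)/8) * h5
  · show emb ((z₂,z₂),(3*z₃,z₃),(2*z₁,0)) =
      cyc (cyc (pt ((z₁:ℝ) / 2) ((z₂:ℝ) * τ / 2) ((z₃:ℝ) * τ ^ 2 / 2)))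
    rw [cyc_pt, cyc_pt]
    refine pt_ext ?_ ?_ ?_ <;> (simp only [q, τ]; push_cast; try ring) <;>
      linear_combination (-(z₃:ℝ)/8) * h5

lemma hV : V = emb '' {x | x ∈ L} := by
  ext v
  constructor
  · rintro (⟨k, s, hs, rfl⟩ | ⟨k, s₁, h₁, s₂, h₂, s₃, h₃, rfl⟩)
    · obtain ⟨z, hz, rfl⟩ := sgn_int hs
      exact ⟨axisP z k, mem_L_iff.mpr (Or.inl ⟨z, hz, k, rfl⟩), emb_axisP k⟩
    · obtain ⟨z₁, hz₁, rfl⟩ := sgn_int h₁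
      obtain ⟨z₂, hz₂, rfl⟩ := sgn_int h₂
      obtain ⟨z₃, hz₃, rfl⟩ := sgn_int h₃
      exact ⟨famP z₁ z₂ z₃ k,
        mem_L_iff.mpr (Or.inr ⟨z₁, hz₁, z₂, hz₂, z₃, hz₃, k, rfl⟩), emb_famP k⟩
  · rintro ⟨x, hx, rfl⟩
    rcases mem_L_iff.mp hx with ⟨z, hz, k, rfl⟩ | ⟨z₁, h₁, z₂, h₂, z₃, h₃, k, rfl⟩
    · exact Or.inl ⟨k, (z:ℝ), sgn_cast hz, emb_axisP k⟩
    · exact Or.inr ⟨k, (z₁:ℝ), sgn_cast h₁, (z₂:ℝ), sgn_cast h₂, (z₃:ℝ), sgn_cast h₃,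
        emb_famP k⟩

lemma c3 : L.Nodup := by decide
lemma c1 : ∀ x ∈ L, NA x = 24 ∧ NB x = 8 := by decide
lemma c2 : ∀ x ∈ L, ∀ y ∈ L, x ≠ y → Pok (NA (psub x y) - 16) (NB (psub x y)) := by decide
lemma c4 : NA (psub (axisP 1 0) (famP 1 1 1 0)) = 16 ∧
    NB (psub (axisP 1 0) (famP 1 1 1 0)) = 0 ∧ axisP 1 0 ≠ famP 1 1 1 0 ∧
    axisP 1 0 ∈ L ∧ famP 1 1 1 0 ∈ L := by decide

lemma τ_pos : 0 < τ := by unfold τ; positivity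

lemma norm_V {v : E3} (hv : v ∈ V) : ‖v‖ = τ := by
  rw [hV] at hv
  obtain ⟨x, hx, rfl⟩ := hv
  obtain ⟨hA, hB⟩ := c1 x hx
  have h : ‖emb x‖^2 = τ^2 := by
    rw [normsq_emb, hA, hB]
    unfold τ
    push_cast
    linear_combination (-(1/4) : ℝ) * s5_sq
  calc ‖emb x‖ = Real.sqrt (‖emb x‖^2) := (Real.sqrt_sq (norm_nonneg _)).symm
    _ = Real.sqrt (τ^2) := by rw [h]
    _ = τ := Real.sqrt_sq τ_pos.le

lemma dist_V {v w : E3} (hv : v ∈ V) (hw : w ∈ V) (hne : v ≠ w) : 1 ≤ ‖v - w‖ := by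
  rw [hV] at hv hw
  obtain ⟨x, hx, rfl⟩ := hv
  obtain ⟨y, hy, rfl⟩ := hw
  have hxy : x ≠ y := fun h => hne (by rw [h])
  have hp := Pok_nonneg (c2 x hx y hy hxy)
  push_cast at hp
  have h : 1 ≤ ‖emb x - emb y‖^2 := by
    rw [emb_sub, normsq_emb]
    linarith
  nlinarith [norm_nonneg (emb x - emb y)]

lemma exists_dist_one : ∃ v ∈ V, ∃ w ∈ V, v ≠ w ∧ ‖v - w‖ = 1 := by
  obtain ⟨hA, hB, hne, hm1, hm2⟩ := c4
  refine ⟨emb (axisP 1 0), ?_, emb (famP 1 1 1 0), ?_, ?_, ?_⟩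
  · rw [hV]; exact ⟨_, hm1, rfl⟩
  · rw [hV]; exact ⟨_, hm2, rfl⟩
  · exact fun h => hne (emb_inj h)
  · have h : ‖emb (axisP 1 0) - emb (famP 1 1 1 0)‖^2 = 1 := by
      rw [emb_sub, normsq_emb, hA, hB]; norm_num
    nlinarith [norm_nonneg (emb (axisP 1 0) - emb (famP 1 1 1 0))]

end Stmt17Aux

open Stmt17Aux in
theorem stmt17 (r : ℝ) (hr : r = 1 / Real.sqrt 5)
    (ctr : E3 → E3) (hctr : ctr = fun v => ((1 + r) / τ) • v) :
    V.ncard = 30 ∧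
    (∀ v ∈ V, ‖v‖ = τ) ∧
    IsLeast {d : ℝ | ∃ v ∈ V, ∃ w ∈ V, v ≠ w ∧ d = ‖v - w‖} 1 ∧
    (∀ v ∈ V, ‖ctr v‖ = 1 + r) ∧
    IsLeast {d : ℝ | ∃ v ∈ V, ∃ w ∈ V, v ≠ w ∧ d = dist (ctr v) (ctr w)} (2 * r) ∧
    (∀ v ∈ V, ∀ w ∈ V, v ≠ w →
      Disjoint (interior (Metric.closedBall (ctr v) r))
        (interior (Metric.closedBall (ctr w) r))) ∧
    (∃ v ∈ V, ∃ w ∈ V, v ≠ w ∧ dist (ctr v) (ctr w) = 2 * r) := by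
  have hrpos : 0 < r := by rw [hr]; positivity
  have hτ : (0:ℝ) < τ := τ_pos
  have hc : (1 + r) / τ = 2 * r := by
    rw [hr, div_eq_iff hτ.ne']
    unfold τ
    have h5 := s5_sq
    have h0 := s5_pos
    field_simp
    ring_nf
  have hdist : ∀ v w : E3, dist (ctr v) (ctr w) = 2 * r * ‖v - w‖ := by
    intro v w
    rw [hctr]
    simp only [dist_eq_norm, ← smul_sub, norm_smul, Real.norm_eq_abs, hc]
    rw [abs_of_nonneg (by positivity)]
  refine ⟨?_, fun v hv => norm_V hv, ⟨?_, ?_⟩, ?_, ⟨?_, ?_⟩, ?_, ?_⟩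
  · rw [hV]
    rw [Set.ncard_image_of_injective _ emb_inj]
    have : {x | x ∈ L} = ↑L.toFinset := by ext x; simp
    rw [this, Set.ncard_coe_finset]
    decide
  · obtain ⟨v, hv, w, hw, hne, h1⟩ := exists_dist_one
    exact ⟨v, hv, w, hw, hne, h1.symm⟩
  · rintro d ⟨v, hv, w, hw, hne, rfl⟩
    exact dist_V hv hw hne
  · intro v hv
    rw [hctr]
    simp only [norm_smul, Real.norm_eq_abs, norm_V hv]
    rw [abs_of_nonneg (div_nonneg (by linarith) τ_pos.le)]
    rw [div_mul_cancel₀ _ τ_pos.ne']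
  · obtain ⟨v, hv, w, hw, hne, h1⟩ := exists_dist_one
    exact ⟨v, hv, w, hw, hne, by rw [hdist, h1, mul_one]⟩
  · rintro d ⟨v, hv, w, hw, hne, rfl⟩
    rw [hdist]
    nlinarith [dist_V hv hw hne]
  · intro v hv w hw hne
    rw [interior_closedBall _ hrpos.ne', interior_closedBall _ hrpos.ne']
    apply Metric.ball_disjoint_ball
    rw [hdist]
    nlinarith [dist_V hv hw hne]
  · obtain ⟨v, hv, w, hw, hne, h1⟩ := exists_dist_one
    exact ⟨v, hv, w, hw, hne, by rw [hdist, h1, mul_one]⟩
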